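/- Let p be a prime and let k be a positive integer. Then there exists a monic irreducible polynomial f(x) ∈ F_{p^k}[x] of degree p such that f(x) − f(0) has all its coefficients in the prime field F_p and f(0) ∈ 𝓕_k(p). (Concretely, f(x) = x^p − x − a for a suitable a ∈ 𝓕_k(p) with absolute trace Tr_{F_{p^k}/F_p}(a) = 1.) -/

import Mathlib

open Polynomial IntermediateField

/-- `Fcal q m` is the set `𝓕_m(q)` of elements generating `𝔽_{q^m}` over `𝔽_q`. -/
def Fcal (q m : ℕ) {K : Type*} [Monoid K] : Set K :=
  {α | α ^ q ^ m = α ∧ ∀ l : ℕ, 0 < l → α ^ q ^ l = α → m ∣ l}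

section Aux

/-- From `a ^ p ^ m = a`, deduce `a ^ p ^ (m * c) = a`. -/
lemma aux_pow_mul {M : Type*} [Monoid M] {a : M} {p m : ℕ} (h : a ^ p ^ m = a) :
    ∀ c : ℕ, a ^ p ^ (m * c) = a := by
  intro c
  induction c with
  | zero => simp
  | succ n ih => rw [Nat.mul_succ, pow_add, pow_mul, ih, h]

/-- From `a ^ p ^ m = a` and `a ^ p ^ n = a`, deduce the same for `gcd m n`. -/
lemma aux_pow_gcd {M : Type*} [Monoid M] {a : M} {p : ℕ} :
    ∀ m n : ℕ, a ^ p ^ m = a → a ^ p ^ n = a → a ^ p ^ (Nat.gcd m n) = a := by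
  intro m
  induction m using Nat.strong_induction_on with
  | _ m ih =>
    intro n hm hn
    rcases Nat.eq_zero_or_pos m with h0 | h0
    · simpa [h0] using hn
    · rw [Nat.gcd_rec m n]
      have hr : a ^ p ^ (n % m) = a := by
        have hdm : m * (n / m) + n % m = n := Nat.div_add_mod n m
        calc a ^ p ^ (n % m) = (a ^ p ^ (m * (n / m))) ^ p ^ (n % m) := by
              rw [aux_pow_mul hm]
          _ = a ^ p ^ n := by rw [← pow_mul, ← pow_add, hdm]
          _ = a := hn
      exact ih (n % m) (Nat.mod_lt _ h0) m hr hm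

/-- Artin–Schreier iteration formula. -/
lemma aux_AS_pow {E : Type*} [CommRing E] {p : ℕ} [Fact p.Prime] [CharP E p]
    {β b : E} (h : β ^ p = β + b) (n : ℕ) :
    β ^ p ^ n = β + ∑ i ∈ Finset.range n, b ^ p ^ i := by
  induction n with
  | zero => simp
  | succ n ih =>
    have hterm : ∀ i ∈ Finset.range n, (b ^ p ^ i) ^ p = b ^ p ^ (i + 1) := by
      intro i _
      rw [← pow_mul, ← pow_succ]
    rw [pow_succ, pow_mul, ih, add_pow_char, h, sum_pow_char,
      Finset.sum_congr rfl hterm, Finset.sum_range_succ']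
    simp only [pow_zero, pow_one]
    ring

/-- Summing the Artin–Schreier series over `k * d` terms gives `d` copies of the trace. -/
lemma aux_sum_blocks {E : Type*} [CommRing E] {p k : ℕ} {b : E} (hb : b ^ p ^ k = b) :
    ∀ d : ℕ, ∑ i ∈ Finset.range (k * d), b ^ p ^ i
      = d • ∑ i ∈ Finset.range k, b ^ p ^ i := by
  intro d
  induction d with
  | zero => simp
  | succ n ih =>
    have hblock : ∀ i ∈ Finset.range k, b ^ p ^ (k * n + i) = b ^ p ^ i := by
      intro i _
      rw [pow_add, pow_mul, aux_pow_mul hb]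
    rw [Nat.mul_succ, Finset.sum_range_add, ih, Finset.sum_congr rfl hblock, succ_nsmul]

/-- Monicity of the Artin–Schreier polynomial. -/
lemma aux_AS_monic {K : Type*} [Field K] {p : ℕ} (hp2 : 2 ≤ p) (a : K) :
    (X ^ p - X - C a : K[X]).Monic := by
  have h1 : degree (X + C a : K[X]) < (p : ℕ) := by
    rw [degree_X_add_C]
    exact_mod_cast (by omega : 1 < p)
  have h2 := monic_X_pow_sub h1
  rwa [sub_sub]

/-- Degree of the Artin–Schreier polynomial. -/
lemma aux_AS_degree {K : Type*} [Field K] {p : ℕ} (hp2 : 2 ≤ p) (a : K) :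
    (X ^ p - X - C a : K[X]).degree = p := by
  have h1 : degree (X + C a : K[X]) < degree (X ^ p : K[X]) := by
    rw [degree_X_add_C, degree_X_pow]
    exact_mod_cast (by omega : 1 < p)
  rw [sub_sub, degree_sub_eq_left_of_degree_lt h1, degree_X_pow]

lemma aux_AS_natDegree {K : Type*} [Field K] {p : ℕ} (hp2 : 2 ≤ p) (a : K) :
    (X ^ p - X - C a : K[X]).natDegree = p :=
  natDegree_eq_of_degree_eq_some (aux_AS_degree hp2 a)

/-- Irreducibility of the Artin–Schreier polynomial over a finite field,
given that the "trace" of `a` is nonzero. -/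
lemma aux_AS_irred {K : Type*} [Field K] [Finite K] (p k : ℕ) [hp : Fact p.Prime]
    [CharP K p] (hcard : Nat.card K = p ^ k) {a : K}
    (hT : ∑ i ∈ Finset.range k, a ^ p ^ i ≠ 0) :
    Irreducible (X ^ p - X - C a : K[X]) := by
  classical
  letI : Fintype K := Fintype.ofFinite K
  have hcard' : Fintype.card K = p ^ k := by rw [← Nat.card_eq_fintype_card]; exact hcard
  have hp2 : 2 ≤ p := hp.out.two_le
  set f : K[X] := X ^ p - X - C a with hf
  have hfm : f.Monic := aux_AS_monic hp2 a
  have hnd : f.natDegree = p := aux_AS_natDegree hp2 a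
  have hfne : f ≠ 0 := hfm.ne_zero
  set E := f.SplittingField
  haveI : CharP E p := charP_of_injective_algebraMap (algebraMap K E).injective p
  haveI : Finite E := Module.finite_of_finite K
  obtain ⟨β, hβroot'⟩ := Splits.exists_eval_eq_zero (SplittingField.splits f)
    (by rw [degree_map, aux_AS_degree hp2 a]; exact_mod_cast (by omega : p ≠ 0))
  have hβroot : eval₂ (algebraMap K E) β f = 0 := (eval_map (algebraMap K E) β).symm.trans hβroot'
  set b : E := algebraMap K E a with hb
  have hβp : β ^ p = β + b := by
    have h0 : β ^ p - β - b = 0 := by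
      simpa [hf, eval₂_sub, eval₂_pow, eval₂_X, eval₂_C] using hβroot
    linear_combination h0
  have haev : aeval β f = 0 := by rwa [aeval_def]
  have hint : IsIntegral K β := IsIntegral.of_finite K β
  set q := minpoly K β with hq
  have hqd : q ∣ f := minpoly.dvd K β haev
  have hdle : q.natDegree ≤ p := hnd ▸ natDegree_le_of_dvd hqd hfne
  have hd0 : 0 < q.natDegree := minpoly.natDegree_pos hint
  -- β lives in the subfield K⟮β⟯ of cardinality (p^k)^(deg q)
  have hfr : Module.finrank K K⟮β⟯ = q.natDegree := IntermediateField.adjoin.finrank hint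
  letI : Fintype K⟮β⟯ := Fintype.ofFinite _
  have hcardL : Fintype.card K⟮β⟯ = (p ^ k) ^ q.natDegree := by
    rw [Module.card_eq_pow_finrank (K := K) (V := K⟮β⟯), hcard', hfr]
  have hβcard : β ^ p ^ (k * q.natDegree) = β := by
    have h1 := FiniteField.pow_card (IntermediateField.AdjoinSimple.gen K β)
    have h2 := congrArg (algebraMap (↥K⟮β⟯) E) h1
    rwa [map_pow, IntermediateField.AdjoinSimple.algebraMap_gen, hcardL, ← pow_mul] at h2
  have hbk : b ^ p ^ k = b := by
    have h1 := FiniteField.pow_card a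
    rw [hcard'] at h1
    rw [hb, ← map_pow, h1]
  have hiter := aux_AS_pow hβp (k * q.natDegree)
  rw [hβcard] at hiter
  have hsum0 : ∑ i ∈ Finset.range (k * q.natDegree), b ^ p ^ i = 0 :=
    (left_eq_add.mp hiter)
  rw [aux_sum_blocks hbk] at hsum0
  have hTE : (∑ i ∈ Finset.range k, b ^ p ^ i)
      = algebraMap K E (∑ i ∈ Finset.range k, a ^ p ^ i) := by
    rw [map_sum]
    exact Finset.sum_congr rfl fun i _ => by rw [map_pow]
  have hTne : (∑ i ∈ Finset.range k, b ^ p ^ i) ≠ 0 := by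
    rw [hTE]
    exact fun h => hT ((_root_.map_eq_zero (algebraMap K E)).mp h)
  have hcast : (q.natDegree : E) = 0 := by
    rcases mul_eq_zero.mp (by rwa [nsmul_eq_mul] at hsum0) with h | h
    · exact h
    · exact absurd h hTne
  have hpd : p ∣ q.natDegree := (CharP.cast_eq_zero_iff E p _).mp hcast
  have hdeq : q.natDegree = p := le_antisymm hdle (Nat.le_of_dvd hd0 hpd)
  have hassoc : Associated q f :=
    associated_of_dvd_of_natDegree_le hqd hfne (by rw [hnd, hdeq])
  have hqf : q = f := eq_of_monic_of_associated (minpoly.monic hint) hfm hassoc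
  exact hqf ▸ minpoly.irreducible hint

/-- Number of roots of a nonzero polynomial over a finite field. -/
lemma aux_card_roots {K : Type*} [Field K] [Fintype K] [DecidableEq K]
    {g : K[X]} (hg : g ≠ 0) :
    (Finset.univ.filter fun x : K => g.eval x = 0).card ≤ g.natDegree := by
  have hsub : (Finset.univ.filter fun x : K => g.eval x = 0) ⊆ g.roots.toFinset := by
    intro x hx
    rw [Finset.mem_filter] at hx
    exact Multiset.mem_toFinset.mpr (mem_roots'.mpr ⟨hg, hx.2⟩)
  calc (Finset.univ.filter fun x : K => g.eval x = 0).card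
      ≤ g.roots.toFinset.card := Finset.card_le_card hsub
    _ ≤ Multiset.card g.roots := g.roots.toFinset_card_le
    _ ≤ g.natDegree := card_roots' g

/-- The key counting inequality. -/
lemma aux_count (p k : ℕ) (hp2 : 2 ≤ p) (hk : 0 < k) :
    p ^ (k - 1) + ∑ d ∈ Nat.properDivisors k, (p ^ d - 1) < p ^ k := by
  rcases Nat.lt_or_ge k 3 with hk3 | hk3
  · interval_cases k
    · simp [Nat.properDivisors_one]
      omega
    · rw [Nat.Prime.properDivisors Nat.prime_two]
      simp only [Finset.sum_singleton, pow_one]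
      have h2 : p ^ (2 - 1) = p := by norm_num
      have h3 : p ^ 2 = p * p := by ring
      have h4 : 2 * p ≤ p * p := Nat.mul_le_mul_right p hp2
      omega
  · have hsub : ∀ d ∈ Nat.properDivisors k, d < k / 2 + 1 := by
      intro d hd
      rcases Nat.mem_properDivisors.mp hd with ⟨hdvd, hlt⟩
      obtain ⟨c, hc⟩ := hdvd
      have hc2 : 2 ≤ c := by
        rcases Nat.lt_or_ge c 2 with h | h
        · interval_cases c <;> omega
        · exact h
      have : d * 2 ≤ k := by nlinarith
      omega
    have h3 : ∑ d ∈ Nat.properDivisors k, (p ^ d - 1)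
        ≤ ∑ d ∈ Nat.properDivisors k, p ^ d :=
      Finset.sum_le_sum fun d _ => Nat.sub_le _ _
    have h4 : ∑ d ∈ Nat.properDivisors k, p ^ d < p ^ (k / 2 + 1) :=
      Nat.geomSum_lt hp2 hsub
    have h5 : p ^ (k / 2 + 1) ≤ p ^ (k - 1) :=
      Nat.pow_le_pow_right (by omega) (by omega)
    have h6 : 2 * p ^ (k - 1) ≤ p ^ k := by
      calc 2 * p ^ (k - 1) ≤ p * p ^ (k - 1) := Nat.mul_le_mul_right _ hp2
        _ = p ^ k := by rw [← pow_succ']; congr 1; omega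
    omega

/-- Existence of a generator of `GaloisField p k` with nonzero "trace". -/
lemma aux_exists_good (p : ℕ) [hp : Fact p.Prime] (k : ℕ) (hk : 0 < k) :
    ∃ a : GaloisField p k,
      (∑ i ∈ Finset.range k, a ^ p ^ i ≠ 0) ∧
      ∀ l : ℕ, 0 < l → a ^ p ^ l = a → k ∣ l := by
  classical
  set K := GaloisField p k with hK
  letI : Fintype K := Fintype.ofFinite K
  have hcard : Fintype.card K = p ^ k := by
    rw [← Nat.card_eq_fintype_card]; exact GaloisField.card p k hk.ne'
  have hp2 : 2 ≤ p := hp.out.two_le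
  -- the trace polynomial
  set g : K[X] := ∑ i ∈ Finset.range k, X ^ p ^ i with hg
  have hgdeg : g.natDegree ≤ p ^ (k - 1) := by
    refine natDegree_sum_le_of_forall_le _ _ fun i hi => ?_
    rw [natDegree_X_pow]
    exact Nat.pow_le_pow_right (by omega) (by have := Finset.mem_range.mp hi; omega)
  have hgne : g ≠ 0 := by
    have hcoeff : g.coeff (p ^ (k - 1)) = 1 := by
      rw [hg, finset_sum_coeff]
      have hterm : ∀ i ∈ Finset.range k,
          (X ^ p ^ i : K[X]).coeff (p ^ (k - 1)) = if i = k - 1 then (1 : K) else 0 := by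
        intro i _
        rw [coeff_X_pow]
        by_cases hik : i = k - 1
        · subst hik; simp
        · rw [if_neg, if_neg hik]
          intro hpe
          exact hik (Nat.pow_right_injective hp2 hpe).symm
      rw [Finset.sum_congr rfl hterm, Finset.sum_ite_eq' (Finset.range k) (k - 1)]
      rw [if_pos (Finset.mem_range.mpr (by omega))]
    intro h0
    rw [h0, coeff_zero] at hcoeff
    exact zero_ne_one hcoeff
  have hgeval : ∀ x : K, g.eval x = ∑ i ∈ Finset.range k, x ^ p ^ i := by
    intro x
    rw [hg, eval_finset_sum]
    exact Finset.sum_congr rfl fun i _ => by rw [eval_pow, eval_X]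
  set B : Finset K := Finset.univ.filter fun x : K => g.eval x = 0 with hB
  have hBcard : B.card ≤ p ^ (k - 1) := le_trans (aux_card_roots hgne) hgdeg
  set S : ℕ → Finset K := fun d => Finset.univ.filter fun x : K => x ^ (p ^ d - 1) = 1 with hS
  have hScard : ∀ d, 0 < d → (S d).card ≤ p ^ d - 1 := by
    intro d hd
    have h2pd : 2 ≤ p ^ d := by
      calc 2 = 2 ^ 1 := rfl
      _ ≤ p ^ 1 := Nat.pow_le_pow_left hp2 1
      _ ≤ p ^ d := Nat.pow_le_pow_right (by omega) hd
    have hne : (X ^ (p ^ d - 1) - C (1 : K)) ≠ 0 :=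
      X_pow_sub_C_ne_zero (by omega) (1 : K)
    have := aux_card_roots hne
    rw [natDegree_X_pow_sub_C] at this
    refine le_trans (le_of_eq ?_) this
    congr 1
    ext x
    simp [hS, sub_eq_zero]
  set U : Finset K := B ∪ (Nat.properDivisors k).biUnion S with hU
  have hUcard : U.card < Fintype.card K := by
    have h1 : U.card ≤ B.card + ∑ d ∈ Nat.properDivisors k, (S d).card :=
      le_trans (Finset.card_union_le _ _)
        (Nat.add_le_add_left (Finset.card_biUnion_le) _)
    have h2 : ∑ d ∈ Nat.properDivisors k, (S d).card
        ≤ ∑ d ∈ Nat.properDivisors k, (p ^ d - 1) := by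
      refine Finset.sum_le_sum fun d hd => hScard d ?_
      rcases Nat.mem_properDivisors.mp hd with ⟨hdvd, hlt⟩
      rcases Nat.eq_zero_or_pos d with h0 | h0
      · subst h0; rw [Nat.zero_dvd] at hdvd; omega
      · exact h0
    have hkey : p ^ (k - 1) + ∑ d ∈ Nat.properDivisors k, (p ^ d - 1) < p ^ k :=
      aux_count p k hp2 hk
    rw [hcard]
    omega
  have hex : ∃ a : K, a ∉ U := by
    by_contra hcon
    push_neg at hcon
    have : Finset.univ ⊆ U := fun x _ => hcon x
    have := Finset.card_le_card this
    rw [Finset.card_univ] at this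
    omega
  obtain ⟨a, ha⟩ := hex
  rw [hU, Finset.mem_union] at ha
  push_neg at ha
  obtain ⟨hnB, hnS⟩ := ha
  have hT : ∑ i ∈ Finset.range k, a ^ p ^ i ≠ 0 := by
    intro h0
    exact hnB (Finset.mem_filter.mpr ⟨Finset.mem_univ a, by rw [hgeval, h0]⟩)
  refine ⟨a, hT, ?_⟩
  have ha0 : a ≠ 0 := by
    intro h0
    apply hT
    subst h0
    refine Finset.sum_eq_zero fun i _ => zero_pow ?_
    exact pow_ne_zero _ (by omega)
  have hak : a ^ p ^ k = a := by
    have := FiniteField.pow_card a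
    rwa [hcard] at this
  intro l hl hal
  by_contra hnd
  set d := Nat.gcd l k with hd
  have hgcd : a ^ p ^ d = a := aux_pow_gcd l k hal hak
  have hdvd : d ∣ k := Nat.gcd_dvd_right l k
  have hlt : d < k := by
    rcases lt_or_eq_of_le (Nat.le_of_dvd hk hdvd) with h | h
    · exact h
    · exact absurd (h ▸ Nat.gcd_dvd_left l k) hnd
  have hmem : d ∈ Nat.properDivisors k := Nat.mem_properDivisors.mpr ⟨hdvd, hlt⟩
  apply hnS
  refine Finset.mem_biUnion.mpr ⟨d, hmem, ?_⟩
  rw [hS]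
  refine Finset.mem_filter.mpr ⟨Finset.mem_univ a, ?_⟩
  have hpd1 : 1 ≤ p ^ d := Nat.one_le_pow _ _ (by omega)
  have h1 : a ^ (p ^ d - 1) * a = 1 * a := by
    rw [one_mul, ← pow_succ, Nat.sub_add_cancel hpd1, hgcd]
  exact mul_right_cancel₀ ha0 h1

end Aux

/-- For every prime `p` and positive integer `k` there is a monic irreducible
polynomial `f ∈ 𝔽_{p^k}[x]` of degree `p` such that `f - f(0)` has all its
coefficients in the prime field `𝔽_p` and `f(0) ∈ 𝓕_k(p)`. -/
theorem stmt_17 (p : ℕ) [hp : Fact p.Prime] (k : ℕ) (hk : 0 < k) :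
    ∃ f : Polynomial (GaloisField p k),
      f.Monic ∧ Irreducible f ∧ f.natDegree = p ∧
      (∀ i : ℕ, ∃ a : ZMod p,
        (f - Polynomial.C (f.eval 0)).coeff i = algebraMap (ZMod p) (GaloisField p k) a) ∧
      f.eval 0 ∈ (Fcal p k : Set (GaloisField p k)) := by
  classical
  obtain ⟨a, hT, hgen⟩ := aux_exists_good p k hk
  letI : Fintype (GaloisField p k) := Fintype.ofFinite (GaloisField p k)
  have hcard : Fintype.card (GaloisField p k) = p ^ k := by
    rw [← Nat.card_eq_fintype_card]; exact GaloisField.card p k hk.ne'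
  have hp2 : 2 ≤ p := hp.out.two_le
  have hirr : Irreducible (X ^ p - X - C a : (GaloisField p k)[X]) :=
    aux_AS_irred p k (by rw [Nat.card_eq_fintype_card]; exact hcard) hT
  have heval : (X ^ p - X - C a : (GaloisField p k)[X]).eval 0 = -a := by
    simp [zero_pow (by omega : p ≠ 0)]
  refine ⟨X ^ p - X - C a, aux_AS_monic hp2 a, hirr, aux_AS_natDegree hp2 a, ?_, ?_⟩
  · intro i
    have hfc : (X ^ p - X - C a : (GaloisField p k)[X])
        - C ((X ^ p - X - C a : (GaloisField p k)[X]).eval 0) = X ^ p - X := by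
      rw [heval, map_neg]
      ring
    have hmap : (X ^ p - X : (GaloisField p k)[X])
        = Polynomial.map (algebraMap (ZMod p) (GaloisField p k)) (X ^ p - X) := by
      rw [Polynomial.map_sub, Polynomial.map_pow, map_X]
    refine ⟨(X ^ p - X : (ZMod p)[X]).coeff i, ?_⟩
    rw [hfc, hmap, coeff_map]
  · rw [heval]
    constructor
    · have := FiniteField.pow_card (-a)
      rwa [hcard] at this
    · intro l hl hal
      have hneg : (-a) ^ p ^ l = -(a ^ p ^ l) := by
        rw [← iterateFrobenius_def (p := p), ← iterateFrobenius_def (p := p), map_neg]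
      rw [hneg] at hal
      exact hgen l hl (neg_injective hal)
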